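/- arXiv:1806.00650 — 2 statements merged into one kernel-verified Lean document; each statement's English description precedes it below -/
import Mathlib

section
/- Let X ∈ ℝ^{n×p} be a matrix with restricted isometry constant δⱼ of order j, S₁, S₂ ⊆ {1,…,p} disjoint index sets with card(S₁ ∪ S₂) ≤ j, and P the orthogonal projection onto the column span of X_{S₁}. Then for every b ∈ ℝ^{card(S₂)}, (1 - δⱼ)‖b‖² ≤ ‖(I - P)X_{S₂}b‖² ≤ (1 + δⱼ)‖b‖². -/
/-- A vector `b ∈ ℝᵖ` is `j`-sparse if it has at most `j` nonzero entries. -/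
def Sparse {p : ℕ} (j : ℕ) (b : Fin p → ℝ) : Prop :=
  (Finset.univ.filter fun i => b i ≠ 0).card ≤ j

/-- `δ` is the restricted isometry constant of order `j` of `X`: the smallest
`δ ≥ 0` with `(1-δ)‖b‖² ≤ ‖Xb‖² ≤ (1+δ)‖b‖²` for all `j`-sparse `b`. -/
def IsRIC {n p : ℕ} (X : Matrix (Fin n) (Fin p) ℝ) (j : ℕ) (δ : ℝ) : Prop :=
  IsLeast {d : ℝ | 0 ≤ d ∧ ∀ b : Fin p → ℝ, Sparse j b →
    (1 - d) * (∑ i, b i ^ 2) ≤ (∑ r, X.mulVec b r ^ 2) ∧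
      (∑ r, X.mulVec b r ^ 2) ≤ (1 + d) * (∑ i, b i ^ 2)} δ

theorem aux_10 {n p : ℕ} (X : Matrix (Fin n) (Fin p) ℝ) (j : ℕ) (δ : ℝ)
    (hδ : IsRIC X j δ) (hδ1 : δ < 1)
    (S₁ S₂ : Finset (Fin p)) (hdisj : Disjoint S₁ S₂)
    (hcard : (S₁ ∪ S₂).card ≤ j)
    (b : Fin p → ℝ) (hb : ∀ i, b i ≠ 0 → i ∈ S₂) :
    ∀ (K : Submodule ℝ (EuclideanSpace ℝ (Fin n))),
    K = Submodule.span ℝ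
        ((fun i : Fin p => (show EuclideanSpace ℝ (Fin n) from WithLp.toLp 2 (fun r => X r i))) '' ↑S₁) →
    ∀ (v : EuclideanSpace ℝ (Fin n)), v = (show _ from WithLp.toLp 2 (X.mulVec b)) →
    (1 - δ) * (∑ i, b i ^ 2) ≤
        ‖v - (Submodule.orthogonalProjectionOnto K v : EuclideanSpace ℝ (Fin n))‖ ^ 2 ∧
      ‖v - (Submodule.orthogonalProjectionOnto K v : EuclideanSpace ℝ (Fin n))‖ ^ 2 ≤
        (1 + δ) * (∑ i, b i ^ 2) := by
  rintro K rfl v rfl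
  set K : Submodule ℝ (EuclideanSpace ℝ (Fin n)) :=
      Submodule.span ℝ
        ((fun i : Fin p => (show EuclideanSpace ℝ (Fin n) from WithLp.toLp 2 (fun r => X r i))) '' ↑S₁)
  set v : EuclideanSpace ℝ (Fin n) := (show _ from WithLp.toLp 2 (X.mulVec b))
  have hδ0 : 0 ≤ δ := hδ.1.1
  have hprop := hδ.1.2
  have hnorm : ∀ x : EuclideanSpace ℝ (Fin n), ‖x‖ ^ 2 = ∑ r, x r ^ 2 := by
    intro x
    rw [EuclideanSpace.norm_eq, Real.sq_sqrt (by positivity)]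
    simp [sq_abs]
  -- representation of the projection
  obtain ⟨c, hc, hrep⟩ :
      ∃ c : Fin p → ℝ, (∀ i, c i ≠ 0 → i ∈ S₁) ∧
        ((Submodule.orthogonalProjectionOnto K v : EuclideanSpace ℝ (Fin n)) = WithLp.toLp 2 (X.mulVec c)) := by
    have hmem : ((Submodule.orthogonalProjectionOnto K v : EuclideanSpace ℝ (Fin n))) ∈ K :=
      (Submodule.orthogonalProjectionOnto K v).2
    refine Submodule.span_induction ?_ ?_ ?_ ?_ hmem
    · rintro x ⟨i, hi, rfl⟩
      refine ⟨Pi.single i 1, fun k hk => ?_, ?_⟩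
      · by_cases h : k = i
        · subst h; exact hi
        · simp [Pi.single_eq_of_ne h] at hk
      · ext r
        simp [Matrix.mulVec_single]
    · exact ⟨0, by simp, by simp [Matrix.mulVec_zero]⟩
    · rintro x y _ _ ⟨c₁, hc₁, rfl⟩ ⟨c₂, hc₂, rfl⟩
      refine ⟨c₁ + c₂, fun k hk => ?_, by rw [Matrix.mulVec_add, WithLp.toLp_add]⟩
      by_cases h1 : c₁ k = 0
      · exact hc₂ k (by simpa [h1] using hk)
      · exact hc₁ k h1
    · rintro r x _ ⟨c₁, hc₁, rfl⟩
      exact ⟨r • c₁, fun k hk => hc₁ k (by intro h; simp [h] at hk),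
        by rw [Matrix.mulVec_smul, WithLp.toLp_smul]⟩
  set w : EuclideanSpace ℝ (Fin n) :=
    (Submodule.orthogonalProjectionOnto K v : EuclideanSpace ℝ (Fin n)) with hw
  have hcS1 : ∀ i, i ∈ S₂ → c i = 0 := by
    intro i hi
    by_contra h
    exact (Finset.disjoint_left.mp hdisj (hc i h)) hi
  have hbc : ∀ i, b i * c i = 0 := by
    intro i
    by_cases h : b i = 0
    · simp [h]
    · simp [hcS1 i (hb i h)]
  have hvw : v - w = WithLp.toLp 2 (X.mulVec (b - c)) := by
    rw [hrep]
    show WithLp.toLp 2 (X.mulVec b) - WithLp.toLp 2 (X.mulVec c) = _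
    rw [← WithLp.toLp_sub, Matrix.mulVec_sub]
  have hsparse_b : Sparse j b := by
    refine le_trans (Finset.card_le_card ?_) hcard
    intro i hi
    simp only [Finset.mem_filter] at hi
    exact Finset.mem_union_right _ (hb i hi.2)
  have hsparse_bc : Sparse j (b - c) := by
    refine le_trans (Finset.card_le_card ?_) hcard
    intro i hi
    simp only [Finset.mem_filter, Finset.mem_union] at hi ⊢
    by_cases h : b i = 0
    · have : c i ≠ 0 := by
        intro h2; exact hi.2 (by simp [h, h2])
      exact Or.inl (hc i this)
    · exact Or.inr (hb i h)
  have hsum : ∑ i, (b - c) i ^ 2 = (∑ i, b i ^ 2) + ∑ i, c i ^ 2 := by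
    rw [← Finset.sum_add_distrib]
    refine Finset.sum_congr rfl fun i _ => ?_
    have := hbc i
    simp only [Pi.sub_apply]
    nlinarith [hbc i]
  have hVW2 : ‖v - w‖ ^ 2 = ∑ r, X.mulVec (b - c) r ^ 2 := by
    rw [hnorm, hvw]
  constructor
  · have h1 := (hprop (b - c) hsparse_bc).1
    rw [hVW2]
    refine le_trans ?_ h1
    rw [hsum]
    have : (0:ℝ) ≤ ∑ i, c i ^ 2 := by positivity
    nlinarith
  · -- Pythagoras
    have horth : inner ℝ w (v - w) = (0:ℝ) := by
      have hm := K.sub_starProjection_mem_orthogonal v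
      exact hm w (Submodule.orthogonalProjectionOnto K v).2
    have hpy : ‖v‖ ^ 2 = ‖w‖ ^ 2 + ‖v - w‖ ^ 2 := by
      have := norm_add_sq_real w (v - w)
      rw [add_sub_cancel] at this
      rw [this, horth]; ring
    have h2 := (hprop b hsparse_b).2
    have hV2 : ‖v‖ ^ 2 = ∑ r, X.mulVec b r ^ 2 := hnorm v
    nlinarith [sq_nonneg ‖w‖]

/-- Let `δ < 1` be the RIC of order `j` of `X`, let `S₁, S₂` be disjoint index
sets with `card(S₁ ∪ S₂) ≤ j`, and let `P` be the orthogonal projection onto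
the span of the columns of `X` indexed by `S₁`.  Then for every vector `b`
supported on `S₂` (representing `X_{S₂}b` via `X.mulVec b`),
`(1-δ)‖b‖² ≤ ‖(I - P)X b‖² ≤ (1+δ)‖b‖²`. -/
theorem stmt_10 {n p : ℕ} (X : Matrix (Fin n) (Fin p) ℝ) (j : ℕ) (δ : ℝ)
    (hδ : IsRIC X j δ) (hδ1 : δ < 1)
    (S₁ S₂ : Finset (Fin p)) (hdisj : Disjoint S₁ S₂)
    (hcard : (S₁ ∪ S₂).card ≤ j)
    (b : Fin p → ℝ) (hb : ∀ i, b i ≠ 0 → i ∈ S₂) :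
    letI K : Submodule ℝ (EuclideanSpace ℝ (Fin n)) :=
      Submodule.span ℝ
        ((fun i : Fin p => (show EuclideanSpace ℝ (Fin n) from WithLp.toLp 2 (fun r => X r i))) '' ↑S₁)
    letI v : EuclideanSpace ℝ (Fin n) := show _ from WithLp.toLp 2 (X.mulVec b)
    (1 - δ) * (∑ i, b i ^ 2) ≤
        ‖v - (Submodule.orthogonalProjectionOnto K v : EuclideanSpace ℝ (Fin n))‖ ^ 2 ∧
      ‖v - (Submodule.orthogonalProjectionOnto K v : EuclideanSpace ℝ (Fin n))‖ ^ 2 ≤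
        (1 + δ) * (∑ i, b i ^ 2) :=
  aux_10 X j δ hδ hδ1 S₁ S₂ hdisj hcard b hb _ rfl _ rfl
end

section
/- Under the RIC condition δ_{k₀} < 1 of order k₀ for X, if the support estimate S' ⊊ S is a strict subset of the true support S of a k₀-sparse vector β, then ‖(I - P_{S'})Xβ‖₂ ≥ √(1 - δ_{k₀}) · β_min, where β_min = min_{j∈S} |β_j| and P_{S'} projects onto span(X_{S'}). -/
/-- Under the RIC condition `δ_{k₀} < 1` for `X`, if a support estimate
`S' ⊊ S` is a strict subset of the true support `S` of the `k₀`-sparse vector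
`β`, then `‖(I - P_{S'})Xβ‖₂ ≥ √(1 - δ_{k₀}) · β_min`, where
`β_min = min_{j ∈ S} |β_j|` and `P_{S'}` is the orthogonal projection onto the
span of the columns of `X` indexed by `S'`. -/
theorem stmt_11 {n p : ℕ} (X : Matrix (Fin n) (Fin p) ℝ) (k₀ : ℕ) (δ : ℝ)
    (hδ : IsRIC X k₀ δ) (hδ1 : δ < 1)
    (β : Fin p → ℝ) (S : Finset (Fin p))
    (hS : S = Finset.univ.filter fun i => β i ≠ 0)
    (hk₀ : S.card = k₀)
    (S' : Finset (Fin p)) (hss : S' ⊂ S) (hSne : S.Nonempty) :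
    letI K : Submodule ℝ (EuclideanSpace ℝ (Fin n)) :=
      Submodule.span ℝ
        ((fun i : Fin p => (show EuclideanSpace ℝ (Fin n) from WithLp.toLp 2 fun r => X r i)) '' ↑S')
    letI v : EuclideanSpace ℝ (Fin n) := show _ from WithLp.toLp 2 (X.mulVec β)
    Real.sqrt (1 - δ) * S.inf' hSne (fun j => |β j|) ≤
      ‖v - (K.orthogonalProjectionOnto v : EuclideanSpace ℝ (Fin n))‖ := by
  dsimp only
  set v : EuclideanSpace ℝ (Fin n) := WithLp.toLp 2 (X.mulVec β) with hv
  set K : Submodule ℝ (EuclideanSpace ℝ (Fin n)) :=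
    Submodule.span ℝ ((fun i : Fin p => WithLp.toLp 2 fun r : Fin n => X r i) '' ↑S') with hK
  -- pick j₀ ∈ S \ S'
  obtain ⟨j₀, hj₀S, hj₀S'⟩ : ∃ j₀, j₀ ∈ S ∧ j₀ ∉ S' := by
    obtain ⟨j₀, h1, h2⟩ := Finset.exists_of_ssubset hss
    exact ⟨j₀, h1, h2⟩
  -- the projection is X.mulVec c for some c supported on S'
  have hmem : (K.orthogonalProjectionOnto v : EuclideanSpace ℝ (Fin n)) ∈ K :=
    (K.orthogonalProjectionOnto v).2
  have hrepr : ∃ c : Fin p → ℝ, (∀ i, i ∉ S' → c i = 0) ∧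
      ∀ r, (K.orthogonalProjectionOnto v : EuclideanSpace ℝ (Fin n)) r = X.mulVec c r := by
    refine Submodule.span_induction ?_ ?_ ?_ ?_ hmem
    · rintro x ⟨i, hi, rfl⟩
      refine ⟨Pi.single i 1, fun j hj => Pi.single_eq_of_ne (by rintro rfl; exact hj hi) 1, ?_⟩
      intro r
      simp [Matrix.mulVec, dotProduct, Pi.single_apply, Finset.sum_ite_eq']
    · exact ⟨0, fun _ _ => rfl, fun r => by simp [Matrix.mulVec, dotProduct]⟩
    · rintro x y - - ⟨c₁, hc₁, hx⟩ ⟨c₂, hc₂, hy⟩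
      refine ⟨c₁ + c₂, fun i hi => by simp [hc₁ i hi, hc₂ i hi], fun r => ?_⟩
      simp [Matrix.mulVec_add, hx r, hy r]
    · rintro a x - ⟨c, hc, hx⟩
      refine ⟨a • c, fun i hi => by simp [hc i hi], fun r => ?_⟩
      simp [Matrix.mulVec_smul, hx r]
  obtain ⟨c, hc, hPv⟩ := hrepr
  -- β - c is k₀-sparse
  have hsupp : ∀ i, (β - c) i ≠ 0 → i ∈ S := by
    intro i hi
    by_contra hiS
    have hβ : β i = 0 := by
      by_contra h
      exact hiS (hS ▸ Finset.mem_filter.mpr ⟨Finset.mem_univ i, h⟩)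
    have hci : c i = 0 := hc i (fun h => hiS (hss.1 h))
    exact hi (by simp [hβ, hci])
  have hsparse : Sparse k₀ (β - c) := by
    have : (Finset.univ.filter fun i => (β - c) i ≠ 0) ⊆ S := fun i hi =>
      hsupp i (Finset.mem_filter.mp hi).2
    calc (Finset.univ.filter fun i => (β - c) i ≠ 0).card ≤ S.card :=
          Finset.card_le_card this
      _ = k₀ := hk₀
  -- RIP lower bound
  have hRIP := (hδ.1.2 (β - c) hsparse).1
  have h1δ : (0:ℝ) ≤ 1 - δ := by linarith
  -- c j₀ = 0, so (β - c) j₀ = β j₀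
  have hcj : c j₀ = 0 := hc j₀ hj₀S'
  have hterm : (β j₀) ^ 2 ≤ ∑ i, (β - c) i ^ 2 := by
    have : (β - c) j₀ ^ 2 ≤ ∑ i, (β - c) i ^ 2 :=
      Finset.single_le_sum (f := fun i => (β - c) i ^ 2) (fun i _ => sq_nonneg _)
        (Finset.mem_univ j₀)
    simpa [hcj] using this
  have hnormeq : ‖v - (K.orthogonalProjectionOnto v : EuclideanSpace ℝ (Fin n))‖ =
      Real.sqrt (∑ r, (X.mulVec (β - c)) r ^ 2) := by
    rw [EuclideanSpace.norm_eq]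
    congr 1
    refine Finset.sum_congr rfl fun r _ => ?_
    rw [Real.norm_eq_abs, sq_abs]
    have : (v - (K.orthogonalProjectionOnto v : EuclideanSpace ℝ (Fin n))) r =
        X.mulVec (β - c) r := by
      rw [Matrix.mulVec_sub]
      show v r - (K.orthogonalProjectionOnto v : EuclideanSpace ℝ (Fin n)) r = _
      rw [hPv r]
      rfl
    rw [this]
  have hmin : S.inf' hSne (fun j => |β j|) ≤ |β j₀| := Finset.inf'_le _ hj₀S
  calc Real.sqrt (1 - δ) * S.inf' hSne (fun j => |β j|)
      ≤ Real.sqrt (1 - δ) * |β j₀| :=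
        mul_le_mul_of_nonneg_left hmin (Real.sqrt_nonneg _)
    _ = Real.sqrt ((1 - δ) * (β j₀) ^ 2) := by
        rw [Real.sqrt_mul h1δ, Real.sqrt_sq_eq_abs]
    _ ≤ Real.sqrt (∑ r, (X.mulVec (β - c)) r ^ 2) := by
        apply Real.sqrt_le_sqrt
        calc (1 - δ) * (β j₀) ^ 2 ≤ (1 - δ) * ∑ i, (β - c) i ^ 2 :=
              mul_le_mul_of_nonneg_left hterm h1δ
          _ ≤ _ := hRIP
    _ = ‖v - (K.orthogonalProjectionOnto v : EuclideanSpace ℝ (Fin n))‖ := hnormeq.symm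
end
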